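/- Assume n > 2 and k*·n < m. Then an A-scoring rule (with these scores) is regret-free truth-telling if and only if k*·n = m − 1. -/

import Mathlib

open Function

/-- A preference: a bijection from positions (`0` = bottom/worst, `m-1` = top/best)
to alternatives.  `p k` is the alternative in the `(k+1)`-th position from the bottom. -/
abbrev Pref (m : ℕ) := Equiv.Perm (Fin m)

/-- A profile: one preference for each of the `n` agents. -/
abbrev Profile (n m : ℕ) := Fin n → Pref m

/-- `x` is strictly preferred to `y` under `p`. -/
def prefers {m : ℕ} (p : Pref m) (x y : Fin m) : Prop :=
  p.symm y < p.symm x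

instance {m : ℕ} (p : Pref m) (x y : Fin m) : Decidable (prefers p x y) :=
  inferInstanceAs (Decidable (p.symm y < p.symm x))

/-- `x` is the top (best) alternative of `p`. -/
def IsBest {m : ℕ} (p : Pref m) (x : Fin m) : Prop :=
  ∀ y, p.symm y ≤ p.symm x

instance {m : ℕ} (p : Pref m) (x : Fin m) : Decidable (IsBest p x) :=
  inferInstanceAs (Decidable (∀ y, p.symm y ≤ p.symm x))

/-- Regret-free truth-telling: whenever a misreport `Pi'` by agent `i` yields a strictly
better outcome, there is a subprofile of the others (a full profile `Pstar` agreeing with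
`P` at `i`) consistent with the observed outcome at which the misreport does strictly worse. -/
def RFTT {n m : ℕ} (f : Profile n m → Fin m) : Prop :=
  ∀ (i : Fin n) (P : Profile n m) (Pi' : Pref m),
    prefers (P i) (f (update P i Pi')) (f P) →
    ∃ Pstar : Profile n m, Pstar i = P i ∧ f Pstar = f P ∧
      prefers (P i) (f Pstar) (f (update Pstar i Pi'))

/-- Strategy-proofness: truth-telling yields a weakly better outcome. -/
def StrategyProof {n m : ℕ} (f : Profile n m → Fin m) : Prop :=
  ∀ (P : Profile n m) (i : Fin n) (Pi' : Pref m),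
    f P = f (update P i Pi') ∨ prefers (P i) (f P) (f (update P i Pi'))

/-- Tops-only: the outcome only depends on the agents' top alternatives. -/
def TopsOnly {n m : ℕ} (f : Profile n m → Fin m) : Prop :=
  ∀ P P' : Profile n m, (∀ i x, IsBest (P i) x ↔ IsBest (P' i) x) → f P = f P'

/-- Efficiency: no alternative is strictly preferred to the outcome by every agent. -/
def Efficient {n m : ℕ} (f : Profile n m → Fin m) : Prop :=
  ∀ P : Profile n m, ¬ ∃ y, ∀ i, prefers (P i) y (f P)

/-- Dictatorship: some agent always gets his top alternative. -/
def Dictatorial {n m : ℕ} (f : Profile n m → Fin m) : Prop :=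
  ∃ i : Fin n, ∀ P : Profile n m, IsBest (P i) (f P)

/-- Anonymity: invariance under permutations of the agents. -/
def Anonymous {n m : ℕ} (f : Profile n m → Fin m) : Prop :=
  ∀ (P : Profile n m) (σ : Equiv.Perm (Fin n)), f P = f (fun i => P (σ i))

/-- Neutrality: relabelling the alternatives relabels the outcome accordingly. -/
def Neutral {n m : ℕ} (f : Profile n m → Fin m) : Prop :=
  ∀ (P : Profile n m) (π : Equiv.Perm (Fin m)),
    π (f P) = f (fun i => (P i).trans π)

/-- The minimal position (`0`-indexed, from the bottom) of alternative `x` in profile `P`. -/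
noncomputable def minpos {n m : ℕ} (P : Profile n m) (x : Fin m) : ℕ :=
  ⨅ i : Fin n, ((P i).symm x : ℕ)

/-- The maxmin winners of profile `P`. -/
def MaxminSet {n m : ℕ} (P : Profile n m) : Set (Fin m) :=
  {x | ∀ y, minpos P y ≤ minpos P x}

/-- An `A`-maxmin rule: breaks ties among maxmin winners by a fixed strict linear order. -/
def AMaxmin {n m : ℕ} (f : Profile n m → Fin m) : Prop :=
  ∃ r : Fin m → Fin m → Prop, IsStrictTotalOrder (Fin m) r ∧
    ∀ P : Profile n m, f P ∈ MaxminSet P ∧ ∀ y ∈ MaxminSet P, y ≠ f P → r (f P) y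

/-- An `N`-maxmin rule: breaks ties among maxmin winners by a fixed agent's preference. -/
def NMaxmin {n m : ℕ} (f : Profile n m → Fin m) : Prop :=
  ∃ i : Fin n, ∀ P : Profile n m,
    f P ∈ MaxminSet P ∧ ∀ y ∈ MaxminSet P, y ≠ f P → prefers (P i) (f P) y

/-- The score of alternative `x` in profile `P`, for scores `s` (indexed by position
from the bottom). -/
noncomputable def score {n m : ℕ} (s : Fin m → ℝ) (P : Profile n m) (x : Fin m) : ℝ :=
  ∑ i : Fin n, s ((P i).symm x)

/-- The scoring winners of profile `P`. -/
def ScoreSet {n m : ℕ} (s : Fin m → ℝ) (P : Profile n m) : Set (Fin m) :=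
  {x | ∀ y, score s P y ≤ score s P x}

/-- An `A`-scoring rule: breaks ties among scoring winners by a fixed strict linear order. -/
def AScoring {n m : ℕ} (s : Fin m → ℝ) (f : Profile n m → Fin m) : Prop :=
  ∃ r : Fin m → Fin m → Prop, IsStrictTotalOrder (Fin m) r ∧
    ∀ P : Profile n m, f P ∈ ScoreSet s P ∧ ∀ y ∈ ScoreSet s P, y ≠ f P → r (f P) y

/-- An `N`-scoring rule: breaks ties among scoring winners by a fixed agent's preference. -/
def NScoring {n m : ℕ} (s : Fin m → ℝ) (f : Profile n m → Fin m) : Prop :=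
  ∃ i : Fin n, ∀ P : Profile n m,
    f P ∈ ScoreSet s P ∧ ∀ y ∈ ScoreSet s P, y ≠ f P → prefers (P i) (f P) y

/-- The number of agents preferring `a` to `b` in profile `P`. -/
def numPref {n m : ℕ} (P : Profile n m) (a b : Fin m) : ℕ :=
  (Finset.univ.filter fun i => prefers (P i) a b).card

/-- `a` is a Condorcet winner at `P`. -/
def CondorcetWinner {n m : ℕ} (P : Profile n m) (a : Fin m) : Prop :=
  ∀ b, b ≠ a → numPref P b a < numPref P a b

/-- Condorcet consistency: the rule picks the Condorcet winner whenever one exists. -/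
def CondorcetConsistent {n m : ℕ} (f : Profile n m → Fin m) : Prop :=
  ∀ (P : Profile n m) (a : Fin m), CondorcetWinner P a → f P = a

/-- `p'` is a monotonic transformation of `p` with respect to `a`: all positions up to
(and including) the position of `a` are unchanged. -/
def MonoTransf {m : ℕ} (p p' : Pref m) (a : Fin m) : Prop :=
  ∀ k : Fin m, k ≤ p.symm a → p k = p' k

/-- Monotonicity: an alternative ranked below the outcome by agent `i` cannot become
the outcome after a monotonic transformation of `i`'s preference w.r.t. the outcome. -/
def MonotoneRule {n m : ℕ} (f : Profile n m → Fin m) : Prop :=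
  ∀ (P : Profile n m) (i : Fin n) (b : Fin m), prefers (P i) (f P) b →
    ∀ Pi' : Pref m, MonoTransf (P i) Pi' (f P) → f (update P i Pi') ≠ b

/-- One pairwise majority contest: the challenger `y` beats the incumbent `c` only if
strictly more agents prefer `y` to `c` (ties go to the incumbent, who always comes
earlier in the fixed order). -/
def duel {n m : ℕ} (P : Profile n m) (c y : Fin m) : Fin m :=
  if numPref P c y < numPref P y c then y else c

/-- Run successive pairwise contests starting from incumbent `c` against the listed
challengers in order. -/
def seRun {n m : ℕ} (P : Profile n m) : Fin m → List (Fin m) → Fin m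
  | c, [] => c
  | c, y :: rest => seRun P (duel P c y) rest

/-- The survivor of successive elimination along a list of alternatives (none if empty). -/
def seWinner? {n m : ℕ} (P : Profile n m) : List (Fin m) → Option (Fin m)
  | [] => none
  | c :: rest => some (seRun P c rest)

/-- A successive elimination rule: there is an enumeration `e 0 ≻ e 1 ≻ ⋯ ≻ e (m-1)` of the
alternatives such that the rule outputs the survivor of the sequential pairwise majority
contests (ties resolved in favour of the `≻`-greater, i.e. earlier, alternative). -/
def SuccElim {n m : ℕ} (f : Profile n m → Fin m) : Prop :=
  ∃ e : Fin m ≃ Fin m, ∀ P : Profile n m,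
    seWinner? P ((List.finRange m).map e) = some (f P)

section RFTTAux
open Finset

def alivePX {n m : ℕ} (K : ℕ) (P : Profile n m) (x : Fin m) : Prop :=
  ∀ i, K ≤ ((P i).symm x : ℕ)

instance {n m : ℕ} (K : ℕ) (P : Profile n m) (x : Fin m) : Decidable (alivePX K P x) :=
  inferInstanceAs (Decidable (∀ _i, _))

lemma card_filter_ltX (m K : ℕ) (hK : K ≤ m) :
    (Finset.univ.filter fun k : Fin m => (k:ℕ) < K).card = K := by
  have h : (Finset.univ.filter fun k : Fin m => (k:ℕ) < K)
      = Finset.map (Fin.castLEEmb hK) Finset.univ := by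
    ext x
    simp only [mem_filter, mem_univ, true_and, mem_map, Fin.castLEEmb_apply]
    constructor
    · intro hx; exact ⟨⟨x, hx⟩, rfl⟩
    · rintro ⟨k, rfl⟩; exact k.2
  rw [h]; simp

lemma card_filter_bottomX {m : ℕ} (K : ℕ) (hK : K ≤ m) (p : Pref m) :
    (Finset.univ.filter fun x : Fin m => ((p.symm x : ℕ) < K)).card = K := by
  have himg : (Finset.univ.filter fun x : Fin m => ((p.symm x : ℕ) < K))
      = (Finset.univ.filter fun k : Fin m => (k:ℕ) < K).image p := by
    ext x
    simp only [mem_filter, mem_univ, true_and, mem_image]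
    constructor
    · intro hx; exact ⟨p.symm x, hx, p.apply_symm_apply x⟩
    · rintro ⟨k, hk, rfl⟩; simpa using hk
  rw [himg, card_image_of_injective _ p.injective, card_filter_ltX m K hK]

lemma alive_cardX {n m K : ℕ} (hK : K ≤ m) (P : Profile n m) :
    m - K * n ≤ (Finset.univ.filter fun x => alivePX K P x).card := by
  classical
  have hsub : (Finset.univ.filter fun x : Fin m => ¬ alivePX K P x)
      ⊆ Finset.univ.biUnion (fun i : Fin n =>
          Finset.univ.filter fun x : Fin m => ((P i).symm x : ℕ) < K) := by
    intro x hx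
    simp only [mem_filter, mem_univ, true_and, alivePX, not_forall, not_le] at hx
    obtain ⟨i, hi⟩ := hx
    exact Finset.mem_biUnion.2 ⟨i, mem_univ i, mem_filter.2 ⟨mem_univ x, hi⟩⟩
  have hdead : (Finset.univ.filter fun x : Fin m => ¬ alivePX K P x).card ≤ K * n := by
    calc _ ≤ _ := card_le_card hsub
    _ ≤ ∑ i : Fin n, (Finset.univ.filter fun x : Fin m => ((P i).symm x : ℕ) < K).card :=
        card_biUnion_le
    _ = K * n := by simp [card_filter_bottomX K hK, mul_comm]
  have hsplit := Finset.card_filter_add_card_filter_not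
    (s := (Finset.univ : Finset (Fin m))) (p := fun x => alivePX K P x)
  simp only [card_univ, Fintype.card_fin] at hsplit
  omega

lemma exists_pref_bottomX {m K : ℕ} (B : Finset (Fin m)) (hB : B.card = K) :
    ∃ p : Pref m, ∀ x, ((p.symm x : ℕ) < K ↔ x ∈ B) := by
  classical
  have hK : K ≤ m := by
    have := card_le_card (subset_univ B)
    simpa [hB] using this
  have hBc : Bᶜ.card = m - K := by simp [card_compl, hB]
  set e1 := B.orderIsoOfFin hB with he1
  set e2 := Bᶜ.orderIsoOfFin hBc with he2
  set g : Fin m → Fin m := fun k =>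
    if h : (k : ℕ) < K then (e1 ⟨k, h⟩ : Fin m)
    else (e2 ⟨(k : ℕ) - K, by have := k.2; omega⟩ : Fin m) with hg
  have hmem : ∀ k : Fin m, (g k ∈ B ↔ (k:ℕ) < K) := by
    intro k
    by_cases h : (k:ℕ) < K
    · simp only [hg, dif_pos h]
      exact ⟨fun _ => h, fun _ => (e1 ⟨k, h⟩).2⟩
    · simp only [hg, dif_neg h]
      have hc : (e2 ⟨(k:ℕ) - K, by have := k.2; omega⟩ : Fin m) ∉ B := by
        have h2 : ((e2 ⟨(k:ℕ) - K, by have := k.2; omega⟩ : Fin m)) ∈ Bᶜ :=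
          (e2 ⟨(k:ℕ) - K, by have := k.2; omega⟩).2
        exact Finset.mem_compl.1 h2
      exact ⟨fun hm => absurd hm hc, fun hk => absurd hk h⟩
  have hinj : Function.Injective g := by
    intro k k' hkk
    by_cases h1 : (k:ℕ) < K <;> by_cases h2 : (k':ℕ) < K
    · simp only [hg, dif_pos h1, dif_pos h2] at hkk
      have := e1.injective (Subtype.coe_injective hkk)
      exact Fin.ext (by simpa using congrArg Fin.val this)
    · exact absurd ((hmem k').1 (hkk ▸ (hmem k).2 h1)) h2
    · exact absurd ((hmem k).1 (hkk ▸ (hmem k').2 h2)) h1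
    · simp only [hg, dif_neg h1, dif_neg h2] at hkk
      have := e2.injective (Subtype.coe_injective hkk)
      have hv : (k:ℕ) - K = (k':ℕ) - K := by simpa using congrArg Fin.val this
      have := k.2; have := k'.2
      exact Fin.ext (by omega)
  refine ⟨Equiv.ofBijective g (Finite.injective_iff_bijective.1 hinj), fun x => ?_⟩
  set p := Equiv.ofBijective g (Finite.injective_iff_bijective.1 hinj) with hp
  have hx : g (p.symm x) = x := p.apply_symm_apply x
  conv_rhs => rw [← hx]
  exact (hmem _).symm

lemma exists_rmaxX {α : Type*} (r : α → α → Prop) (hr : IsTrans α r) (htr : IsTrichotomous α r)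
    (s : Finset α) (hs : s.Nonempty) : ∃ a ∈ s, ∀ y ∈ s, y ≠ a → r a y := by
  classical
  induction hs using Finset.Nonempty.cons_induction with
  | singleton a => exact ⟨a, mem_singleton_self a, fun y hy hne => absurd (mem_singleton.1 hy) hne⟩
  | cons a s ha hs ih =>
    obtain ⟨b, hb, hbmax⟩ := ih
    rcases _root_.trichotomous_of r a b with hab | hab | hab
    · refine ⟨a, mem_cons_self a s, fun y hy hne => ?_⟩
      rcases mem_cons.1 hy with rfl | hy
      · exact absurd rfl hne
      · by_cases hyb : y = b
        · exact hyb ▸ hab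
        · exact hr.trans _ _ _ hab (hbmax y hy hyb)
    · exact absurd (hab ▸ hb) ha
    · refine ⟨b, mem_cons.2 (Or.inr hb), fun y hy hne => ?_⟩
      rcases mem_cons.1 hy with rfl | hy
      · exact hab
      · exact hbmax y hy hne

lemma winner_charX {n m : ℕ} (hm : 2 ≤ m) (s : Fin m → ℝ)
    (hmono : Monotone s) (K : ℕ) (hK1 : 1 ≤ K) (hKm : K ≤ m - 1)
    (hKlt : s ⟨K - 1, by omega⟩ < s ⟨K, by omega⟩)
    (hKconst : ∀ j : Fin m, K ≤ (j : ℕ) → s j = s ⟨m - 1, by omega⟩)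
    (hKn : K * n < m) (r : Fin m → Fin m → Prop)
    (f : Profile n m → Fin m)
    (hspec : ∀ P : Profile n m, f P ∈ ScoreSet s P ∧
      ∀ y ∈ ScoreSet s P, y ≠ f P → r (f P) y)
    (P : Profile n m) :
    alivePX K P (f P) ∧ ∀ y, alivePX K P y → y ≠ f P → r (f P) y := by
  classical
  have hKltm : K < m := by omega
  set M := s ⟨m - 1, by omega⟩ with hM
  have hjlt : ∀ j : Fin m, (j:ℕ) < K → s j < M := by
    intro j hj
    have h1 : s j ≤ s ⟨K - 1, by omega⟩ := hmono (by rw [Fin.le_def]; simp; omega)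
    have h2 : s ⟨K, by omega⟩ = M := hKconst ⟨K, by omega⟩ (by simp)
    linarith
  have hterm_le : ∀ (x : Fin m) (i : Fin n), s ((P i).symm x) ≤ M := by
    intro x i
    by_cases h : K ≤ (((P i).symm x : Fin m) : ℕ)
    · exact (hKconst _ h).le
    · exact (hjlt _ (by omega)).le
  have halive_score : ∀ x, alivePX K P x → score s P x = ∑ _i : Fin n, M :=
    fun x hx => Finset.sum_congr rfl fun i _ => hKconst _ (hx i)
  have hdead_score : ∀ x, ¬ alivePX K P x → score s P x < ∑ _i : Fin n, M := by
    intro x hx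
    obtain ⟨i, hi⟩ : ∃ i, ((P i).symm x : ℕ) < K := by
      simpa [alivePX, not_forall, not_le] using hx
    exact Finset.sum_lt_sum (fun i _ => hterm_le x i) ⟨i, Finset.mem_univ i, hjlt _ hi⟩
  obtain ⟨x0, hx0⟩ : ∃ x0, alivePX K P x0 := by
    have h1 := alive_cardX (K := K) hKltm.le P
    have h2 : 0 < (Finset.univ.filter fun x => alivePX K P x).card := by omega
    obtain ⟨x0, hx0⟩ := Finset.card_pos.1 h2
    exact ⟨x0, (Finset.mem_filter.1 hx0).2⟩
  obtain ⟨hfmem, htie⟩ := hspec P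
  have halivef : alivePX K P (f P) := by
    by_contra hcon
    have h1 := hdead_score _ hcon
    have h2 : score s P x0 ≤ score s P (f P) := hfmem x0
    rw [halive_score x0 hx0] at h2
    linarith
  refine ⟨halivef, fun y hy hne => htie y ?_ hne⟩
  intro z
  rw [halive_score y hy]
  by_cases hz : alivePX K P z
  · rw [halive_score z hz]
  · exact le_of_lt (hdead_score z hz)

end RFTTAux


/-- Assume n > 2 and k*·n < m. Then an A-scoring rule (with these scores)
is regret-free truth-telling if and only if k*·n = m − 1.  Here `K` is the
(1-indexed) value k*: the largest position whose score is not maximal. -/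
theorem stmt_10 (n m : ℕ) (hn : 2 < n) (hm : 2 ≤ m) (s : Fin m → ℝ)
    (hmono : Monotone s) (K : ℕ) (hK1 : 1 ≤ K) (hKm : K ≤ m - 1)
    (hKlt : s ⟨K - 1, by omega⟩ < s ⟨K, by omega⟩)
    (hKconst : ∀ j : Fin m, K ≤ (j : ℕ) → s j = s ⟨m - 1, by omega⟩)
    (hKn : K * n < m)
    (f : Profile n m → Fin m) (hf : AScoring s f) :
    RFTT f ↔ K * n = m - 1 := by
  classical
  obtain ⟨r, hr, hspec⟩ := hf
  haveI := hr
  have rtrans : ∀ {x y z : Fin m}, r x y → r y z → r x z := fun h1 h2 => _root_.trans_of r h1 h2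
  have rasymm : ∀ {x y : Fin m}, r x y → r y x → False := fun h1 h2 =>
    _root_.irrefl_of r _ (rtrans h1 h2)
  have hwin : ∀ P : Profile n m, alivePX K P (f P) ∧
      ∀ y, alivePX K P y → y ≠ f P → r (f P) y :=
    winner_charX hm s hmono K hK1 hKm hKlt hKconst hKn r f hspec
  have hKltm : K < m := by omega
  constructor
  · -- RFTT → K*n = m-1
    intro hR
    by_contra hnem
    have hKn2 : K * n ≤ m - 2 := by omega
    obtain ⟨a1, -, ha1⟩ := exists_rmaxX r inferInstance inferInstance Finset.univ
      ⟨⟨0, by omega⟩, Finset.mem_univ _⟩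
    obtain ⟨d, -, hd⟩ := exists_rmaxX (fun x y => r y x)
      ⟨fun _ _ _ h1 h2 => rtrans h2 h1⟩
      ⟨fun a b h1 h2 => by rcases _root_.trichotomous_of r a b with h|h|h
                           exacts [absurd h h2, h, absurd h h1]⟩
      Finset.univ ⟨⟨0, by omega⟩, Finset.mem_univ _⟩
    have had : a1 ≠ d := by
      intro h
      have hy : ∃ y : Fin m, y ≠ a1 := by
        by_cases h0 : a1 = ⟨0, by omega⟩
        · exact ⟨⟨1, by omega⟩, by rw [h0]; simp [Fin.ext_iff]⟩
        · exact ⟨⟨0, by omega⟩, fun hc => h0 hc.symm⟩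
      obtain ⟨y, hy⟩ := hy
      have h1 : r a1 y := ha1 y (Finset.mem_univ y) hy
      have h2 : r y d := hd y (Finset.mem_univ y) (h ▸ hy)
      exact rasymm h1 (h ▸ h2)
    set u : Fin m := ⟨K, hKltm⟩ with hu
    set v : Fin m := ⟨0, by omega⟩ with hv
    have huv : u ≠ v := by simp [hu, hv, Fin.ext_iff]; omega
    set σ0 := Equiv.swap u a1 with hσ0
    set w := σ0.symm d with hw
    have hwu : w ≠ u := by
      intro h
      apply had
      have h2 : σ0 w = d := σ0.apply_symm_apply d
      rw [h] at h2
      rw [← h2]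
      simp [hσ0]
    set σ : Pref m := (Equiv.swap v w).trans σ0 with hσ
    have hσu : σ u = a1 := by
      have h1 : Equiv.swap v w u = u := Equiv.swap_apply_of_ne_of_ne huv (Ne.symm hwu)
      rw [hσ, Equiv.trans_apply, h1, hσ0]
      exact Equiv.swap_apply_left u a1
    have hσv : σ v = d := by
      have h1 : Equiv.swap v w v = w := Equiv.swap_apply_left v w
      rw [hσ, Equiv.trans_apply, h1, hw, Equiv.apply_symm_apply]
    have hsa1 : σ.symm a1 = u := by rw [Equiv.symm_apply_eq]; exact hσu.symm
    have hsd : σ.symm d = v := by rw [Equiv.symm_apply_eq]; exact hσv.symm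
    set i : Fin n := ⟨0, by omega⟩ with hi
    set P : Profile n m := fun _ => σ with hP
    set Pi' : Pref m := σ.trans (Equiv.swap a1 d) with hPi'
    have hPisymm : ∀ x, (Pi'.symm x : Fin m) = σ.symm (Equiv.swap a1 d x) := by
      intro x
      rw [hPi', Equiv.symm_trans_apply, Equiv.symm_swap]
    have hfP : f P = a1 := by
      by_contra hfa
      have halive : alivePX K P a1 := by
        intro j
        show K ≤ ((σ.symm a1 : Fin m) : ℕ)
        rw [hsa1]
      have h1 := (hwin P).2 a1 halive (fun h => hfa h.symm)
      exact rasymm h1 (ha1 (f P) (Finset.mem_univ _) hfa)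
    set Q := update P i Pi' with hQ
    have hQi : Q i = Pi' := by rw [hQ]; exact update_self i Pi' P
    set j1 : Fin n := ⟨1, by omega⟩ with hj1
    have hj1i : j1 ≠ i := by simp [hj1, hi, Fin.ext_iff]
    have hQj1 : Q j1 = σ := by rw [hQ, update_of_ne hj1i]
    have hbQ := (hwin Q).1
    set b := f Q with hb
    have hba1 : b ≠ a1 := by
      intro h
      have h1 := hbQ i
      rw [hQi, h, hPisymm, Equiv.swap_apply_left, hsd] at h1
      simp [hv] at h1
      omega
    have hbd : b ≠ d := by
      intro h
      have h1 := hbQ j1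
      rw [hQj1, h, hsd] at h1
      simp [hv] at h1
      omega
    have hbpos : K < ((σ.symm b : Fin m) : ℕ) := by
      have h1 := hbQ j1
      rw [hQj1] at h1
      have h2 : σ.symm b ≠ u := fun h => hba1 (by rw [← hσu, ← h, Equiv.apply_symm_apply])
      have h3 : ((σ.symm b : Fin m) : ℕ) ≠ K := fun h => h2 (Fin.ext (by simp [hu, h]))
      omega
    have hman : prefers (P i) (f Q) (f P) := by
      show (P i).symm (f P) < (P i).symm (f Q)
      rw [hfP]
      show σ.symm a1 < σ.symm b
      rw [hsa1, Fin.lt_def]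
      simpa [hu] using hbpos
    obtain ⟨Pstar, hPsi, hPsf, hpref⟩ := hR i P Pi' (by rw [← hQ]; exact hman)
    set U := update Pstar i Pi' with hU
    set c := f U with hc2
    have hfPs : f Pstar = a1 := hPsf.trans hfP
    have hprefc : ((σ.symm c : Fin m) : ℕ) < K := by
      have h1 : (P i).symm c < (P i).symm (f Pstar) := hpref
      rw [hfPs] at h1
      have h4 : σ.symm c < u := by rw [← hsa1]; exact h1
      simpa [hu, Fin.lt_def] using h4
    have hcal := (hwin U).1
    have hci : K ≤ ((Pi'.symm c : Fin m) : ℕ) := by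
      have h1 := hcal i
      rwa [hU, update_self] at h1
    have hcd : c = d := by
      by_contra hcd
      have hca1 : c ≠ a1 := by
        intro h
        rw [h, hsa1] at hprefc
        simp [hu] at hprefc
      have h6 : Equiv.swap a1 d c = c := Equiv.swap_apply_of_ne_of_ne hca1 hcd
      rw [hPisymm c, h6] at hci
      omega
    have h2 := alive_cardX (K := K) hKltm.le U
    obtain ⟨y, hy, z, hz, hyz⟩ := Finset.one_lt_card.1
      (show 1 < (Finset.univ.filter fun x => alivePX K U x).card by omega)
    have hkey : ∀ y', alivePX K U y' → y' ≠ c → False := by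
      intro y' hal hne
      have h3 : r c y' := (hwin U).2 y' hal hne
      rw [hcd] at h3
      have h5 : y' ≠ d := by rw [← hcd]; exact hne
      exact rasymm (hd y' (Finset.mem_univ _) h5) h3
    by_cases hyc : y = c
    · exact hkey z (Finset.mem_filter.1 hz).2 (fun h => hyz (hyc.trans h.symm))
    · exact hkey y (Finset.mem_filter.1 hy).2 hyc
  · -- K*n = m-1 → RFTT
    intro hEq i P Pi' hpref0
    set a := f P with ha
    have haAlive : alivePX K P a := (hwin P).1
    set Q := update P i Pi' with hQ
    set b := f Q with hb
    have hba : b ≠ a := by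
      intro h
      have : (P i).symm a < (P i).symm b := hpref0
      rw [h] at this
      exact lt_irrefl _ this
    have hstep1 : ((Pi'.symm a : Fin m) : ℕ) < K := by
      by_contra hcon
      push_neg at hcon
      have haQ : alivePX K Q a := by
        intro j
        by_cases hji : j = i
        · rw [hji]
          show K ≤ (((update P i Pi' i).symm a : Fin m) : ℕ)
          rw [update_self]
          exact hcon
        · show K ≤ (((update P i Pi' j).symm a : Fin m) : ℕ)
          rw [update_of_ne hji]
          exact haAlive j
      have hrba : r b a := (hwin Q).2 a haQ (fun h => hba h.symm)
      have hbdead : ¬ alivePX K P b := fun hal => rasymm hrba ((hwin P).2 b hal hba)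
      obtain ⟨j, hj⟩ : ∃ j, ((P j).symm b : ℕ) < K := by
        simpa [alivePX, not_forall, not_le] using hbdead
      have hji : j = i := by
        by_contra hji
        have hx := (hwin Q).1 j
        show False
        have : K ≤ (((update P i Pi' j).symm b : Fin m) : ℕ) := hx
        rw [update_of_ne hji] at this
        omega
      subst hji
      have hlt : (P j).symm a < (P j).symm b := hpref0
      rw [Fin.lt_def] at hlt
      have := haAlive j
      omega
    -- construction of Pstar
    have hmEq : m = K * n + 1 := by omega
    have hnn : K * n = K * (n - 1) + K := by
      have h1 : n - 1 + 1 = n := by omega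
      calc K * n = K * ((n-1) + 1) := by rw [h1]
      _ = K * (n-1) + K := by ring
    set Bi := Finset.univ.filter (fun x : Fin m => ((P i).symm x : ℕ) < K) with hBi
    have hBicard : Bi.card = K := card_filter_bottomX K hKltm.le (P i)
    have haBi : a ∉ Bi := by
      simp only [hBi, Finset.mem_filter, Finset.mem_univ, true_and, not_lt]
      exact haAlive i
    set C := Finset.univ \ (insert a Bi) with hC
    have hCcard : C.card = K * (n-1) := by
      rw [hC, Finset.card_sdiff_of_subset (Finset.subset_univ _),
        Finset.card_insert_of_notMem haBi, hBicard, Finset.card_univ, Fintype.card_fin]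
      omega
    set g := C.orderIsoOfFin hCcard with hg
    set ι : Fin n → ℕ := fun j => if (j:ℕ) < (i:ℕ) then (j:ℕ) else (j:ℕ) - 1 with hι
    set blockt : ℕ → Finset (Fin m) := fun t =>
      Finset.univ.image (fun l : Fin K =>
        (g ⟨min t (n-2) * K + (l:ℕ), by
          calc min t (n-2) * K + (l:ℕ) < min t (n-2) * K + K := by have := l.2; omega
          _ = (min t (n-2) + 1) * K := by ring
          _ ≤ (n-1) * K := Nat.mul_le_mul_right K (by omega)
          _ = K * (n-1) := Nat.mul_comm _ _⟩ : Fin m)) with hblockt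
    have hblockcard : ∀ t, (blockt t).card = K := by
      intro t
      rw [hblockt]
      rw [Finset.card_image_of_injective _ ?_, Finset.card_univ, Fintype.card_fin]
      intro l l' hll
      have h1 := g.injective (Subtype.coe_injective hll)
      have h2 : min t (n-2) * K + (l:ℕ) = min t (n-2) * K + (l':ℕ) := by
        simpa [Fin.ext_iff] using h1
      exact Fin.ext (by omega)
    have hblocksub : ∀ t, blockt t ⊆ C := by
      intro t x hx
      rw [hblockt] at hx
      obtain ⟨l, -, rfl⟩ := Finset.mem_image.1 hx
      exact (g _).2
    have hcover : ∀ x, x ∈ C → ∃ j : Fin n, j ≠ i ∧ x ∈ blockt (ι j) := by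
      intro x hx
      have hK0 : 0 < K := hK1
      set t' := g.symm ⟨x, hx⟩ with ht'
      have ht'lt : (t' : ℕ) < K * (n - 1) := t'.2
      set t := (t' : ℕ) / K with ht
      have htlt : t < n - 1 := by
        rw [ht, Nat.div_lt_iff_lt_mul hK0]
        exact lt_of_lt_of_eq ht'lt (Nat.mul_comm K (n-1))
      have hlK : (t' : ℕ) % K < K := Nat.mod_lt _ hK0
      have hi2 := i.2
      by_cases hti : t < (i:ℕ)
      · refine ⟨⟨t, by omega⟩, ?_, ?_⟩
        · intro h
          have : t = (i:ℕ) := by simpa [Fin.ext_iff] using h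
          omega
        · have hιval : ι ⟨t, by omega⟩ = t := by
            show (if t < (i:ℕ) then t else t - 1) = t
            rw [if_pos hti]
          rw [hιval, hblockt]
          refine Finset.mem_image.2 ⟨⟨(t':ℕ) % K, hlK⟩, Finset.mem_univ _, ?_⟩
          have hmin : min t (n-2) = t := min_eq_left (by omega)
          have hidx : min t (n-2) * K + ((t':ℕ) % K) = (t' : ℕ) := by
            rw [hmin, ht, Nat.mul_comm]
            exact Nat.div_add_mod _ _
          have h5 : (⟨min t (n-2) * K + ((⟨(t':ℕ) % K, hlK⟩ : Fin K) : ℕ), by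
              show min t (n-2) * K + (t':ℕ) % K < K * (n-1)
              rw [hidx]; exact ht'lt⟩ : Fin (K*(n-1))) = t' := by
            exact Fin.ext (by simpa using hidx)
          show ((g _ : C) : Fin m) = x
          rw [show ((g _ : C) : Fin m) = ((g t' : C) : Fin m) from congrArg _ (congrArg _ h5)]
          rw [ht', g.apply_symm_apply]
      · refine ⟨⟨t+1, by omega⟩, ?_, ?_⟩
        · intro h
          have : t + 1 = (i:ℕ) := by simpa [Fin.ext_iff] using h
          omega
        · have hιval : ι ⟨t+1, by omega⟩ = t := by
            simp only [hι]
            rw [if_neg (by simp; omega)]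
            simp
          rw [hιval, hblockt]
          refine Finset.mem_image.2 ⟨⟨(t':ℕ) % K, hlK⟩, Finset.mem_univ _, ?_⟩
          have hmin : min t (n-2) = t := min_eq_left (by omega)
          have hidx : min t (n-2) * K + ((t':ℕ) % K) = (t' : ℕ) := by
            rw [hmin, ht, Nat.mul_comm]
            exact Nat.div_add_mod _ _
          have h5 : (⟨min t (n-2) * K + ((⟨(t':ℕ) % K, hlK⟩ : Fin K) : ℕ), by
              show min t (n-2) * K + (t':ℕ) % K < K * (n-1)
              rw [hidx]; exact ht'lt⟩ : Fin (K*(n-1))) = t' := by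
            exact Fin.ext (by simpa using hidx)
          show ((g _ : C) : Fin m) = x
          rw [show ((g _ : C) : Fin m) = ((g t' : C) : Fin m) from congrArg _ (congrArg _ h5)]
          rw [ht', g.apply_symm_apply]
    have hQex : ∀ t : ℕ, ∃ p : Pref m, ∀ x, ((p.symm x : ℕ) < K ↔ x ∈ blockt t) :=
      fun t => exists_pref_bottomX (blockt t) (hblockcard t)
    set Pstar : Profile n m := fun j => if j = i then P i else (hQex (ι j)).choose with hPstar
    have hPstari : Pstar i = P i := by rw [hPstar]; simp
    have hPstarj : ∀ j, j ≠ i → ∀ x, (((Pstar j).symm x : ℕ) < K ↔ x ∈ blockt (ι j)) := by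
      intro j hj x
      rw [hPstar]
      simp only [if_neg hj]
      exact (hQex (ι j)).choose_spec x
    have haPs : alivePX K Pstar a := by
      intro j
      by_cases hj : j = i
      · rw [hj, hPstari]; exact haAlive i
      · by_contra hcon
        push_neg at hcon
        have h1 : a ∈ blockt (ι j) := (hPstarj j hj a).1 hcon
        have h2 : a ∈ C := hblocksub _ h1
        rw [hC] at h2
        simp at h2
    have hdeadPs : ∀ x, x ≠ a → ¬ alivePX K Pstar x := by
      intro x hxa hal
      by_cases hxB : x ∈ Bi
      · have h1 := hal i
        rw [hPstari] at h1
        rw [hBi] at hxB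
        simp only [Finset.mem_filter, Finset.mem_univ, true_and] at hxB
        omega
      · have hxC : x ∈ C := by
          rw [hC]
          simp only [Finset.mem_sdiff, Finset.mem_univ, true_and, Finset.mem_insert, not_or]
          exact ⟨hxa, hxB⟩
        obtain ⟨j, hji, hxb⟩ := hcover x hxC
        have h1 := hal j
        have h2 := (hPstarj j hji x).2 hxb
        omega
    have hfPs : f Pstar = a := by
      by_contra h
      exact (hdeadPs (f Pstar) h) (hwin Pstar).1
    refine ⟨Pstar, hPstari, hfPs.trans ha, ?_⟩
    set U := update Pstar i Pi' with hU
    set c := f U with hc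
    have hcal := (hwin U).1
    have hci : K ≤ ((Pi'.symm c : Fin m) : ℕ) := by
      have h1 := hcal i
      show K ≤ ((Pi'.symm c : Fin m) : ℕ)
      have : K ≤ (((update Pstar i Pi' i).symm c : Fin m) : ℕ) := h1
      rwa [update_self] at this
    have hca : c ≠ a := by
      intro h
      rw [h] at hci
      omega
    have hcBi : c ∈ Bi := by
      by_contra hcB
      have hcC : c ∈ C := by
        rw [hC]
        simp only [Finset.mem_sdiff, Finset.mem_univ, true_and, Finset.mem_insert, not_or]
        exact ⟨hca, hcB⟩
      obtain ⟨j, hji, hcb⟩ := hcover c hcC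
      have h1 := hcal j
      have h1' : K ≤ (((update Pstar i Pi' j).symm c : Fin m) : ℕ) := h1
      rw [update_of_ne hji] at h1'
      have h2 := (hPstarj j hji c).2 hcb
      omega
    rw [hBi] at hcBi
    simp only [Finset.mem_filter, Finset.mem_univ, true_and] at hcBi
    have h2 := haAlive i
    have hgoal : ((P i).symm c : ℕ) < ((P i).symm a : ℕ) := by omega
    show (P i).symm (f U) < (P i).symm (f Pstar)
    rw [hfPs]
    exact Fin.lt_def.2 hgoal
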